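/- arXiv:2507.20450 — 6 statements merged into one kernel-verified Lean document; each statement's English description precedes it below -/
import Mathlib

section
/- Assume lim_{s→∞} f'(s)F(s) = q with q > 1. Then lim_{s→∞} f(s)F(s)/s = q − 1 (equivalently, = 1/(p−1) where p := q/(q−1) is the Hölder conjugate of q). -/
open Filter MeasureTheory Set

/-- If `g` has derivative `g'` on `(0,∞)` and `g' → L` at infinity, then `g s / s → L`. -/
lemma tendsto_div_of_hasDerivAt_aux (g g' : ℝ → ℝ) (L : ℝ)
    (hderiv : ∀ s : ℝ, 0 < s → HasDerivAt g (g' s) s)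
    (hg' : Tendsto g' atTop (nhds L)) :
    Tendsto (fun s => g s / s) atTop (nhds L) := by
  rw [Metric.tendsto_atTop] at hg' ⊢
  intro ε hε
  obtain ⟨A, hA⟩ := hg' (ε / 2) (by linarith)
  set B : ℝ := max A 1 with hB
  have hB1 : (1 : ℝ) ≤ B := le_max_right _ _
  have hBA : A ≤ B := le_max_left _ _
  set C : ℝ := |g B - L * B| with hC
  refine ⟨max B (2 * C / ε + 1), fun s hs => ?_⟩
  have hsB : B ≤ s := le_trans (le_max_left _ _) hs
  have hsC : 2 * C / ε + 1 ≤ s := le_trans (le_max_right _ _) hs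
  have hspos : 0 < s := lt_of_lt_of_le (by linarith) hsB
  -- mean value bound on h x = g x - L * x over Icc B s
  have key : |(g s - L * s) - (g B - L * B)| ≤ ε / 2 * (s - B) := by
    have h1 : ∀ x ∈ Icc B s, HasDerivWithinAt (fun x => g x - L * x) (g' x - L) (Icc B s) x := by
      intro x hx
      have h := ((hderiv x (by linarith [hx.1])).sub
        ((hasDerivAt_id x).const_mul L)).hasDerivWithinAt (s := Icc B s)
      rw [mul_one] at h
      exact h
    have h2 : ∀ x ∈ Icc B s, ‖g' x - L‖ ≤ ε / 2 := by
      intro x hx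
      have := hA x (le_trans hBA hx.1)
      rw [Real.dist_eq] at this
      simpa [Real.norm_eq_abs] using this.le
    have := (convex_Icc B s).norm_image_sub_le_of_norm_hasDerivWithin_le h1 h2
      (left_mem_Icc.2 hsB) (right_mem_Icc.2 hsB)
    rw [Real.norm_eq_abs, Real.norm_eq_abs, abs_of_nonneg (by linarith : (0:ℝ) ≤ s - B)] at this
    linarith [this]
  have hgs : |g s - L * s| ≤ C + ε / 2 * (s - B) := by
    have h3 : g s - L * s = (g B - L * B) + ((g s - L * s) - (g B - L * B)) := by ring
    rw [h3]
    exact le_trans (abs_add_le _ _) (by linarith [key])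
  have heq : g s / s - L = (g s - L * s) / s := by field_simp
  rw [Real.dist_eq, heq, abs_div, abs_of_pos hspos, div_lt_iff₀ hspos]
  have hC0 : (0 : ℝ) ≤ C := abs_nonneg _
  have h6 : 2 * C + ε ≤ ε * s := by
    have h5 : ε * (2 * C / ε + 1) = 2 * C + ε := by field_simp
    calc 2 * C + ε = ε * (2 * C / ε + 1) := h5.symm
      _ ≤ ε * s := by nlinarith
  calc |g s - L * s| ≤ C + ε / 2 * (s - B) := hgs
    _ < ε * s := by nlinarith

/-- If `f'(s)·F(s) → q` as `s → ∞` with `q > 1`, where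
`F(s) = ∫_s^∞ dt/f(t)`, then `f(s)·F(s)/s → q − 1` as `s → ∞`. -/
theorem fF_over_s_tendsto (f F : ℝ → ℝ) (q : ℝ) (hq : 1 < q)
    (hf : ContDiffOn ℝ 2 f (Set.Ioi 0))
    (hfpos : ∀ s : ℝ, 0 < s → 0 < f s)
    (hf'pos : ∀ s : ℝ, 0 < s → 0 < deriv f s)
    (hfint : ∀ s : ℝ, 0 < s →
      MeasureTheory.IntegrableOn (fun t => (f t)⁻¹) (Set.Ioi s))
    (hF : ∀ s : ℝ, F s = ∫ t in Set.Ioi s, (f t)⁻¹)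
    (hlim : Filter.Tendsto (fun s => deriv f s * F s) Filter.atTop (nhds q)) :
    Filter.Tendsto (fun s => f s * F s / s) Filter.atTop (nhds (q - 1)) := by
  have hfc : ContinuousOn f (Set.Ioi 0) := hf.continuousOn
  have hinvc : ContinuousOn (fun t => (f t)⁻¹) (Set.Ioi 0) :=
    hfc.inv₀ fun x hx => (hfpos x hx).ne'
  -- F x = F a - ∫ t in a..x, (f t)⁻¹ for 0 < a ≤ x
  have hsplit : ∀ a x : ℝ, 0 < a → a ≤ x →
      F x = F a - ∫ t in a..x, (f t)⁻¹ := by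
    intro a x ha hax
    have hx : 0 < x := lt_of_lt_of_le ha hax
    have h1 : IntegrableOn (fun t => (f t)⁻¹) (Set.Ioc a x) volume :=
      (hfint a ha).mono_set Set.Ioc_subset_Ioi_self
    have h2 : IntegrableOn (fun t => (f t)⁻¹) (Set.Ioi x) volume := hfint x hx
    have hu : Set.Ioc a x ∪ Set.Ioi x = Set.Ioi a := Set.Ioc_union_Ioi_eq_Ioi hax
    have := MeasureTheory.setIntegral_union (Set.Ioc_disjoint_Ioi le_rfl)
      measurableSet_Ioi h1 h2 (f := fun t => (f t)⁻¹) (μ := volume)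
    rw [hu] at this
    rw [hF x, hF a, this, intervalIntegral.integral_of_le hax]
    ring
  -- derivative of F
  have hFderiv : ∀ s : ℝ, 0 < s → HasDerivAt F (-(f s)⁻¹) s := by
    intro s hs
    have ha : (0 : ℝ) < s / 2 := by linarith
    set a : ℝ := s / 2
    have hint : IntervalIntegrable (fun t => (f t)⁻¹) volume a s := by
      rw [intervalIntegrable_iff, Set.uIoc_of_le (by simp only [a]; linarith : a ≤ s)]
      exact (hfint a ha).mono_set Set.Ioc_subset_Ioi_self
    have hmeas : StronglyMeasurableAtFilter (fun t => (f t)⁻¹) (nhds s) volume :=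
      hinvc.stronglyMeasurableAtFilter isOpen_Ioi s hs
    have hcont : ContinuousAt (fun t => (f t)⁻¹) s :=
      hinvc.continuousAt (isOpen_Ioi.mem_nhds hs)
    have hd : HasDerivAt (fun x => F a - ∫ t in a..x, (f t)⁻¹) (-(f s)⁻¹) s := by
      have := (intervalIntegral.integral_hasDerivAt_right hint hmeas hcont).const_sub (F a)
      simpa using this
    apply hd.congr_of_eventuallyEq
    filter_upwards [isOpen_Ioi.mem_nhds (show a < s by simp only [a]; linarith)] with x hx
    exact hsplit a x ha (le_of_lt hx)
  -- derivative of g = f * F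
  have hgderiv : ∀ s : ℝ, 0 < s → HasDerivAt (fun x => f x * F x)
      (deriv f s * F s - 1) s := by
    intro s hs
    have hdf : HasDerivAt f (deriv f s) s := by
      have : DifferentiableAt ℝ f s :=
        ((hf.differentiableOn (by norm_num)).differentiableAt (isOpen_Ioi.mem_nhds hs))
      exact this.hasDerivAt
    have := hdf.mul (hFderiv s hs)
    have hne : f s ≠ 0 := (hfpos s hs).ne'
    have heq : deriv f s * F s + f s * -(f s)⁻¹ = deriv f s * F s - 1 := by
      rw [mul_neg, mul_inv_cancel₀ hne]; ring
    rwa [heq] at this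
  exact tendsto_div_of_hasDerivAt_aux (fun x => f x * F x)
    (fun s => deriv f s * F s - 1) (q - 1) hgderiv (hlim.sub_const 1)
end

section
/- Assume lim_{s→∞} f'(s)F(s) = q with q > 1. Then lim_{ρ→∞} φ'(ρ)/φ(ρ) = 2(q−1) (equivalently, = 2/(p−1) where p := q/(q−1)). -/
open Filter Set MeasureTheory

/-- L'Hôpital-type lemma: if `g` has derivative `g'` eventually and `g' → L` at top,
then `g s / s → L`. -/
lemma aux_div_tendsto_of_deriv_tendsto {g g' : ℝ → ℝ} {L a : ℝ}
    (hg : ∀ s, a ≤ s → HasDerivAt g (g' s) s)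
    (hd : Tendsto g' atTop (nhds L)) :
    Tendsto (fun s => g s / s) atTop (nhds L) := by
  rw [Metric.tendsto_nhds]
  intro ε hε
  have h2 : (0:ℝ) < ε / 2 := by linarith
  obtain ⟨b0, hb0⟩ := Filter.eventually_atTop.1 (Metric.tendsto_nhds.1 hd (ε/2) h2)
  set b : ℝ := max (max a b0) 0 with hbdef
  have hba : a ≤ b := le_trans (le_max_left _ _) (le_max_left _ _)
  have hbb0 : b0 ≤ b := le_trans (le_max_right _ _) (le_max_left _ _)
  have hb0' : (0:ℝ) ≤ b := le_max_right _ _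
  -- mean value inequality for h := g - L • id on [b, ∞)
  have hh : ∀ x ∈ Set.Ici b, HasDerivWithinAt (fun s => g s - L * s) (g' x - L) (Set.Ici b) x := by
    intro x hx
    have h1 := (hg x (le_trans hba hx)).sub ((hasDerivAt_id x).const_mul L)
    rw [mul_one] at h1
    exact h1.hasDerivWithinAt
  have hbound : ∀ x ∈ Set.Ici b, ‖g' x - L‖ ≤ ε / 2 := by
    intro x hx
    have := hb0 x (le_trans hbb0 hx)
    rw [Real.dist_eq] at this
    simpa [Real.norm_eq_abs] using this.le
  have key : ∀ s ∈ Set.Ici b, ‖(g s - L * s) - (g b - L * b)‖ ≤ ε / 2 * ‖s - b‖ :=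
    fun s hs => (convex_Ici b).norm_image_sub_le_of_norm_hasDerivWithin_le hh hbound
      Set.self_mem_Ici hs
  set M : ℝ := |g b - L * b| with hM
  have hM0 : 0 ≤ M := abs_nonneg _
  filter_upwards [eventually_ge_atTop (max (max b 1) (2 * M / ε + 1))] with s hs
  have hsb : b ≤ s := le_trans (le_trans (le_max_left _ _) (le_max_left _ _)) hs
  have hs1 : (1:ℝ) ≤ s := le_trans (le_trans (le_max_right _ _) (le_max_left _ _)) hs
  have hsM : 2 * M / ε + 1 ≤ s := le_trans (le_max_right _ _) hs
  have hs0 : (0:ℝ) < s := lt_of_lt_of_le one_pos hs1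
  have hkey := key s hsb
  rw [Real.norm_eq_abs, Real.norm_eq_abs, abs_of_nonneg (by linarith : (0:ℝ) ≤ s - b)] at hkey
  have habs : |g s - L * s| ≤ M + ε / 2 * s := by
    have htri : |g s - L * s| ≤ |(g s - L * s) - (g b - L * b)| + |g b - L * b| := by
      have := abs_sub_abs_le_abs_sub (g s - L * s) (g b - L * b)
      have h3 := abs_add_le ((g s - L * s) - (g b - L * b)) (g b - L * b)
      calc |g s - L * s| = |((g s - L * s) - (g b - L * b)) + (g b - L * b)| := by ring_nf
        _ ≤ _ := h3
    have : ε / 2 * (s - b) ≤ ε / 2 * s := by nlinarith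
    calc |g s - L * s| ≤ |(g s - L * s) - (g b - L * b)| + M := htri
      _ ≤ ε / 2 * (s - b) + M := by linarith
      _ ≤ M + ε / 2 * s := by linarith
  rw [Real.dist_eq]
  have heq : g s / s - L = (g s - L * s) / s := by field_simp
  rw [heq, abs_div, abs_of_pos hs0, div_lt_iff₀ hs0]
  have h4 : ε * (2 * M / ε + 1) ≤ ε * s := mul_le_mul_of_nonneg_left hsM hε.le
  have h5 : ε * (2 * M / ε + 1) = 2 * M + ε := by field_simp
  have hhalf : ε / 2 * s = ε * s / 2 := by ring
  linarith

/-- If `f'(s)·F(s) → q` as `s → ∞` with `q > 1`, and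
`φ : [ρ₀,∞) → (0,∞)` satisfies `φ' = 2·f(φ)·F(φ)` and `φ(ρ) → ∞`, then
`φ'(ρ)/φ(ρ) = 2·f(φ(ρ))·F(φ(ρ))/φ(ρ) → 2(q−1)` as `ρ → ∞`. -/
theorem phi_logderiv_tendsto (f F : ℝ → ℝ) (q : ℝ) (hq : 1 < q)
    (hf : ContDiffOn ℝ 2 f (Set.Ioi 0))
    (hfpos : ∀ s : ℝ, 0 < s → 0 < f s)
    (hf'pos : ∀ s : ℝ, 0 < s → 0 < deriv f s)
    (hfint : ∀ s : ℝ, 0 < s →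
      MeasureTheory.IntegrableOn (fun t => (f t)⁻¹) (Set.Ioi s))
    (hF : ∀ s : ℝ, F s = ∫ t in Set.Ioi s, (f t)⁻¹)
    (hlim : Filter.Tendsto (fun s => deriv f s * F s) Filter.atTop (nhds q))
    (ρ₀ : ℝ) (φ : ℝ → ℝ)
    (hφpos : ∀ ρ ∈ Set.Ici ρ₀, 0 < φ ρ)
    (hφderiv : ∀ ρ ∈ Set.Ici ρ₀,
      HasDerivWithinAt φ (2 * f (φ ρ) * F (φ ρ)) (Set.Ici ρ₀) ρ)
    (hφtop : Filter.Tendsto φ Filter.atTop Filter.atTop) :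
    Filter.Tendsto (fun ρ => 2 * f (φ ρ) * F (φ ρ) / φ ρ)
      Filter.atTop (nhds (2 * (q - 1))) := by
  have hcont : ContinuousOn f (Set.Ioi 0) := hf.continuousOn
  have hcinv : ∀ s : ℝ, 0 < s → ContinuousAt (fun t => (f t)⁻¹) s := by
    intro s hs
    exact (hcont.continuousAt (Ioi_mem_nhds hs)).inv₀ (ne_of_gt (hfpos s hs))
  -- derivative of F
  have hFd : ∀ s : ℝ, (1:ℝ)/2 < s → HasDerivAt F (-(f s)⁻¹) s := by
    intro s hs
    have h0 : (0:ℝ) < 1/2 := by norm_num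
    have hsplit : ∀ u : ℝ, (1:ℝ)/2 < u →
        F u = F (1/2) - ∫ t in (1/2:ℝ)..u, (f t)⁻¹ := by
      intro u hu
      have hle : (1:ℝ)/2 ≤ u := hu.le
      have hI : F (1/2) = (∫ t in Set.Ioc ((1:ℝ)/2) u, (f t)⁻¹)
          + ∫ t in Set.Ioi u, (f t)⁻¹ := by
        rw [hF (1/2), ← Set.Ioc_union_Ioi_eq_Ioi hle,
          MeasureTheory.setIntegral_union Set.Ioc_disjoint_Ioi_same measurableSet_Ioi
            ((hfint (1/2) h0).mono_set Set.Ioc_subset_Ioi_self)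
            (hfint u (lt_of_lt_of_le h0 hle))]
      rw [intervalIntegral.integral_of_le hle, hF u]
      rw [hI]; ring
    have hint : IntervalIntegrable (fun t => (f t)⁻¹) volume (1/2) s := by
      rw [intervalIntegrable_iff_integrableOn_Ioc_of_le hs.le]
      exact (hfint (1/2) h0).mono_set Set.Ioc_subset_Ioi_self
    have hmeas : StronglyMeasurableAtFilter (fun t => (f t)⁻¹) (nhds s) volume :=
      ContinuousAt.stronglyMeasurableAtFilter isOpen_Ioi
        (fun x hx => hcinv x hx) s (Set.mem_Ioi.2 (by linarith))
    have hder : HasDerivAt (fun u => F (1/2) - ∫ t in (1/2:ℝ)..u, (f t)⁻¹)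
        (-(f s)⁻¹) s :=
      (intervalIntegral.integral_hasDerivAt_right hint hmeas (hcinv s (by linarith))).const_sub _
    refine hder.congr_of_eventuallyEq ?_
    filter_upwards [Ioi_mem_nhds hs] with u hu
    exact hsplit u hu
  -- derivative of f * F
  have hgd : ∀ s : ℝ, (1:ℝ) ≤ s →
      HasDerivAt (fun s => f s * F s) (deriv f s * F s - 1) s := by
    intro s hs
    have hs0 : (0:ℝ) < s := lt_of_lt_of_le one_pos hs
    have hfd : HasDerivAt f (deriv f s) s :=
      ((hf.differentiableOn two_ne_zero).differentiableAt (Ioi_mem_nhds hs0)).hasDerivAt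
    have h1 := hfd.mul (hFd s (by linarith))
    have heq : deriv f s * F s + f s * -(f s)⁻¹ = deriv f s * F s - 1 := by
      rw [mul_neg, mul_inv_cancel₀ (ne_of_gt (hfpos s hs0))]; ring
    rwa [heq] at h1
  have hd : Tendsto (fun s => deriv f s * F s - 1) atTop (nhds (q - 1)) :=
    hlim.sub_const 1
  have key : Tendsto (fun s => f s * F s / s) atTop (nhds (q - 1)) :=
    aux_div_tendsto_of_deriv_tendsto hgd hd
  have comp : Tendsto (fun ρ => f (φ ρ) * F (φ ρ) / φ ρ) atTop (nhds (q - 1)) :=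
    key.comp hφtop
  have final := comp.const_mul 2
  simpa [mul_div_assoc, mul_assoc] using final
end

section
/- Assume lim_{s→∞} f'(s)F(s) = q with q > 1. Then I(ρ) → 0 as ρ → ∞. -/
/-- If `f'(s)·F(s) → q` as `s → ∞` with `q > 1`, then
`I(ρ) = 4·(f(φ(ρ))F(φ(ρ))/φ(ρ))·(f'(φ(ρ))F(φ(ρ)) − q) → 0` as `ρ → ∞`. -/
theorem I_tendsto_zero (f F : ℝ → ℝ) (q : ℝ) (hq : 1 < q)
    (hf : ContDiffOn ℝ 2 f (Set.Ioi 0))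
    (hfpos : ∀ s : ℝ, 0 < s → 0 < f s)
    (hf'pos : ∀ s : ℝ, 0 < s → 0 < deriv f s)
    (hfint : ∀ s : ℝ, 0 < s →
      MeasureTheory.IntegrableOn (fun t => (f t)⁻¹) (Set.Ioi s))
    (hF : ∀ s : ℝ, F s = ∫ t in Set.Ioi s, (f t)⁻¹)
    (hlim : Filter.Tendsto (fun s => deriv f s * F s) Filter.atTop (nhds q))
    (ρ₀ : ℝ) (φ : ℝ → ℝ)
    (hφpos : ∀ ρ ∈ Set.Ici ρ₀, 0 < φ ρ)
    (hφderiv : ∀ ρ ∈ Set.Ici ρ₀,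
      HasDerivWithinAt φ (2 * f (φ ρ) * F (φ ρ)) (Set.Ici ρ₀) ρ)
    (hφtop : Filter.Tendsto φ Filter.atTop Filter.atTop)
    (Ifun : ℝ → ℝ)
    (hI : ∀ ρ : ℝ, Ifun ρ =
      4 * (f (φ ρ) * F (φ ρ) / φ ρ) * (deriv f (φ ρ) * F (φ ρ) - q)) :
    Filter.Tendsto Ifun Filter.atTop (nhds 0) := by
  classical
  -- F is nonnegative on (0,∞)
  have hFnn : ∀ s : ℝ, 0 < s → 0 ≤ F s := by
    intro s hs
    rw [hF s]
    refine MeasureTheory.setIntegral_nonneg measurableSet_Ioi fun t ht => ?_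
    exact inv_nonneg.2 (hfpos t (hs.trans ht)).le
  -- splitting the integral
  have hsplit : ∀ a b : ℝ, 0 < a → a ≤ b →
      F a = (∫ t in Set.Ioc a b, (f t)⁻¹) + F b := by
    intro a b ha hab
    have hb : 0 < b := ha.trans_le hab
    rw [hF a, hF b, ← MeasureTheory.setIntegral_union (Set.Ioc_disjoint_Ioi le_rfl)
      measurableSet_Ioi ((hfint a ha).mono_set Set.Ioc_subset_Ioi_self) (hfint b hb),
      Set.Ioc_union_Ioi_eq_Ioi hab]
  have hFint : ∀ a b : ℝ, 0 < a → 0 < b →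
      F a - F b = ∫ t in a..b, (f t)⁻¹ := by
    intro a b ha hb
    rcases le_total a b with h | h
    · rw [intervalIntegral.integral_of_le h]
      have := hsplit a b ha h
      linarith
    · rw [intervalIntegral.integral_symm, intervalIntegral.integral_of_le h]
      have := hsplit b a hb h
      linarith
  have hfc : ContinuousOn (fun t => (f t)⁻¹) (Set.Ioi 0) :=
    hf.continuousOn.inv₀ fun t ht => (hfpos t ht).ne'
  -- F has derivative -(f s)⁻¹ at every s > 0
  have hFderiv : ∀ s : ℝ, 0 < s → HasDerivAt F (-(f s)⁻¹) s := by
    intro s hs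
    have hmeas : StronglyMeasurableAtFilter (fun t => (f t)⁻¹) (nhds s) :=
      hfc.stronglyMeasurableAtFilter isOpen_Ioi s hs
    have hcontAt : ContinuousAt (fun t => (f t)⁻¹) s :=
      hfc.continuousAt (isOpen_Ioi.mem_nhds hs)
    have hFTC : HasDerivAt (fun u => ∫ t in s..u, (f t)⁻¹) ((f s)⁻¹) s :=
      intervalIntegral.integral_hasDerivAt_right
        (IntervalIntegrable.refl) hmeas hcontAt
    have hG : HasDerivAt (fun u => F s - ∫ t in s..u, (f t)⁻¹) (-(f s)⁻¹) s :=
      hFTC.const_sub (F s)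
    refine hG.congr_of_eventuallyEq ?_
    filter_upwards [isOpen_Ioi.mem_nhds hs] with u hu
    have := hFint u s hu hs
    rw [intervalIntegral.integral_symm] at this
    linarith
  -- g := f * F has derivative f' F - 1
  have hgderiv : ∀ s : ℝ, 0 < s →
      HasDerivAt (fun u => f u * F u) (deriv f s * F s - 1) s := by
    intro s hs
    have hfd : HasDerivAt f (deriv f s) s := by
      have : DifferentiableAt ℝ f s :=
        (hf.contDiffAt (isOpen_Ioi.mem_nhds hs)).differentiableAt (by norm_num)
      exact this.hasDerivAt
    have h := hfd.mul (hFderiv s hs)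
    have hfs : f s ≠ 0 := (hfpos s hs).ne'
    refine h.congr_deriv ?_
    rw [mul_neg, mul_inv_cancel₀ hfs]
    ring
  -- eventually |f' F - q| < 1
  have hev : ∀ᶠ s in Filter.atTop, |deriv f s * F s - q| < 1 := by
    have := Metric.tendsto_nhds.mp hlim 1 one_pos
    filter_upwards [this] with s hs
    rwa [Real.dist_eq] at hs
  obtain ⟨N, hN⟩ := Filter.eventually_atTop.mp hev
  set s₁ : ℝ := max N 1 with hs₁def
  have hs₁pos : (0:ℝ) < s₁ := lt_of_lt_of_le one_pos (le_max_right _ _)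
  have hbound : ∀ s : ℝ, s₁ ≤ s → ‖deriv f s * F s - 1‖ ≤ q := by
    intro s hs
    have h1 := hN s (le_trans (le_max_left _ _) hs)
    have h2 := abs_lt.mp h1
    rw [Real.norm_eq_abs, abs_le]
    constructor <;> linarith
  -- mean value inequality
  have hmv : ∀ s : ℝ, s₁ ≤ s →
      ‖f s * F s - f s₁ * F s₁‖ ≤ q * ‖s - s₁‖ := by
    intro s hs
    exact (convex_Icc s₁ s).norm_image_sub_le_of_norm_hasDerivWithin_le
      (fun x hx => (hgderiv x (lt_of_lt_of_le hs₁pos hx.1)).hasDerivWithinAt)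
      (fun x hx => hbound x hx.1)
      (Set.left_mem_Icc.2 hs) (Set.right_mem_Icc.2 hs)
  set M : ℝ := max s₁ (max |f s₁ * F s₁| 1) with hMdef
  -- ratio bound
  have hratio : ∀ s : ℝ, M ≤ s →
      0 ≤ f s * F s / s ∧ f s * F s / s ≤ q + 1 := by
    intro s hs
    have hss₁ : s₁ ≤ s := le_trans (le_max_left _ _) hs
    have hs1 : (1:ℝ) ≤ s := le_trans (le_trans (le_max_right _ _) (le_max_right _ _)) hs
    have hspos : (0:ℝ) < s := lt_of_lt_of_le one_pos hs1
    have habs : |f s₁ * F s₁| ≤ s := le_trans (le_trans (le_max_left _ _) (le_max_right _ _)) hs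
    have h1 := hmv s hss₁
    rw [Real.norm_eq_abs, Real.norm_eq_abs] at h1
    have h2 := (abs_le.mp h1).2
    have h3 : |s - s₁| = s - s₁ := abs_of_nonneg (by linarith)
    rw [h3] at h2
    have h4 : f s₁ * F s₁ ≤ s := le_trans (le_abs_self _) habs
    have hgnn : 0 ≤ f s * F s :=
      mul_nonneg (hfpos s hspos).le (hFnn s hspos)
    constructor
    · positivity
    · rw [div_le_iff₀ hspos]
      nlinarith
  -- conclusion via squeeze
  have htend : Filter.Tendsto (fun ρ => 4 * (q + 1) * |deriv f (φ ρ) * F (φ ρ) - q|)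
      Filter.atTop (nhds 0) := by
    have h1 : Filter.Tendsto (fun ρ => deriv f (φ ρ) * F (φ ρ)) Filter.atTop (nhds q) :=
      hlim.comp hφtop
    have h2 : Filter.Tendsto (fun ρ => deriv f (φ ρ) * F (φ ρ) - q) Filter.atTop (nhds 0) := by
      simpa using h1.sub_const q
    have h3 : Filter.Tendsto (fun ρ => |deriv f (φ ρ) * F (φ ρ) - q|) Filter.atTop (nhds 0) := by
      simpa using h2.abs
    simpa using h3.const_mul (4 * (q + 1))
  refine squeeze_zero_norm' ?_ htend
  filter_upwards [hφtop.eventually_ge_atTop M] with ρ hρ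
  obtain ⟨hr0, hr1⟩ := hratio (φ ρ) hρ
  rw [hI ρ, Real.norm_eq_abs, abs_mul,
    abs_of_nonneg (by positivity : (0:ℝ) ≤ 4 * (f (φ ρ) * F (φ ρ) / φ ρ))]
  have := abs_nonneg (deriv f (φ ρ) * F (φ ρ) - q)
  nlinarith
end

section
/- Assume lim_{s→∞} f'(s)F(s) = q and lim_{s→∞} f'(s)²/(f(s)f''(s)) = q with q > 1 (in particular f''(s) ≠ 0 for all sufficiently large s). Then I is differentiable on [ρ₀,∞) and I'(ρ) → 0 as ρ → ∞. -/
open Set Filter MeasureTheory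

lemma Fder_aux (f F : ℝ → ℝ)
    (hfc : ∀ s : ℝ, 0 < s → ContinuousAt f s)
    (hfpos : ∀ s : ℝ, 0 < s → 0 < f s)
    (hfint : ∀ s : ℝ, 0 < s → IntegrableOn (fun t => (f t)⁻¹) (Set.Ioi s))
    (hF : ∀ s : ℝ, F s = ∫ t in Set.Ioi s, (f t)⁻¹) :
    ∀ s : ℝ, 0 < s → HasDerivAt F (-(f s)⁻¹) s := by
  intro s hs
  set s₀ := s / 2 with hs₀def
  have hs₀ : 0 < s₀ := by positivity
  have hs₀s : s₀ < s := by linarith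
  have hcont : ContinuousOn (fun t => (f t)⁻¹) (Set.Ioi 0) := fun x hx =>
    ((hfc x hx).inv₀ (hfpos x hx).ne').continuousWithinAt
  have key : ∀ x ∈ Set.Ioi s₀, F x = F s₀ - ∫ t in s₀..x, (f t)⁻¹ := by
    intro x hx
    have hx' : s₀ ≤ x := le_of_lt hx
    have hsplit : (∫ t in Set.Ioi s₀, (f t)⁻¹)
        = (∫ t in Set.Ioc s₀ x, (f t)⁻¹) + ∫ t in Set.Ioi x, (f t)⁻¹ := by
      rw [← MeasureTheory.setIntegral_union (Set.Ioc_disjoint_Ioi le_rfl)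
        measurableSet_Ioi ((hfint s₀ hs₀).mono_set Set.Ioc_subset_Ioi_self)
        ((hfint s₀ hs₀).mono_set (Set.Ioi_subset_Ioi hx')),
        Set.Ioc_union_Ioi_eq_Ioi hx']
    rw [hF x, hF s₀, hsplit, intervalIntegral.integral_of_le hx']
    ring
  have hint : IntervalIntegrable (fun t => (f t)⁻¹) volume s₀ s := by
    rw [intervalIntegrable_iff_integrableOn_Ioc_of_le (le_of_lt hs₀s)]
    exact (hfint s₀ hs₀).mono_set Set.Ioc_subset_Ioi_self
  have hmeas : StronglyMeasurableAtFilter (fun t => (f t)⁻¹) (nhds s) volume :=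
    hcont.stronglyMeasurableAtFilter isOpen_Ioi s hs
  have hd : HasDerivAt (fun x => F s₀ - ∫ t in s₀..x, (f t)⁻¹) (-(f s)⁻¹) s := by
    have := (intervalIntegral.integral_hasDerivAt_right hint hmeas
      ((hfc s hs).inv₀ (hfpos s hs).ne')).const_sub (F s₀)
    simpa using this
  exact hd.congr_of_eventuallyEq <| Filter.eventuallyEq_of_mem
    (isOpen_Ioi.mem_nhds (show s ∈ Set.Ioi s₀ from hs₀s)) key


lemma div_tendsto_of_deriv_tendsto (a a' : ℝ → ℝ) (L : ℝ)
    (hd : ∀ s : ℝ, 0 < s → HasDerivAt a (a' s) s)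
    (hlim : Filter.Tendsto a' Filter.atTop (nhds L)) :
    Filter.Tendsto (fun s => a s / s) Filter.atTop (nhds L) := by
  rw [Metric.tendsto_nhds]
  intro ε hε
  have hε2 : 0 < ε / 2 := by linarith
  have h1 : ∀ᶠ s in Filter.atTop, |a' s - L| < ε / 2 := by
    have := (Metric.tendsto_nhds.mp hlim) (ε / 2) hε2
    simpa [Real.dist_eq] using this
  obtain ⟨s₀, hs₀⟩ := (h1.and (Filter.eventually_gt_atTop 0)).exists_forall_of_atTop
  have hs₀pos : 0 < s₀ := (hs₀ s₀ le_rfl).2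
  have hdiffOn : ∀ x ∈ interior (Set.Ici s₀), DifferentiableAt ℝ a x := by
    intro x hx
    rw [interior_Ici] at hx
    exact (hd x (lt_trans hs₀pos hx)).differentiableAt
  have hcontOn : ContinuousOn a (Set.Ici s₀) := fun x hx =>
    ((hd x (lt_of_lt_of_le hs₀pos hx)).differentiableAt.continuousAt).continuousWithinAt
  have hlow : MonotoneOn (fun x => a x - (L - ε/2) * x) (Set.Ici s₀) := by
    refine monotoneOn_of_deriv_nonneg (convex_Ici s₀) ?_ ?_ ?_
    · exact hcontOn.sub (Continuous.continuousOn (by continuity))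
    · intro x hx
      exact ((hdiffOn x hx).sub (by fun_prop)).differentiableWithinAt
    · intro x hx
      have hx' := hx; rw [interior_Ici] at hx'
      have hdx : HasDerivAt (fun x => a x - (L - ε/2) * x) (a' x - (L - ε/2)) x := by
        exact ((hd x (lt_trans hs₀pos hx')).sub ((hasDerivAt_id' x).const_mul (L - ε/2))).congr_deriv (by ring)
      rw [hdx.deriv]
      have := abs_lt.mp (hs₀ x (le_of_lt hx')).1
      linarith [this.1]
  have hhigh : MonotoneOn (fun x => (L + ε/2) * x - a x) (Set.Ici s₀) := by
    refine monotoneOn_of_deriv_nonneg (convex_Ici s₀) ?_ ?_ ?_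
    · exact (Continuous.continuousOn (by continuity)).sub hcontOn
    · intro x hx
      exact ((by fun_prop : DifferentiableAt ℝ (fun x => (L + ε/2) * x) x).sub
        (hdiffOn x hx)).differentiableWithinAt
    · intro x hx
      have hx' := hx; rw [interior_Ici] at hx'
      have hdx : HasDerivAt (fun x => (L + ε/2) * x - a x) ((L + ε/2) - a' x) x := by
        exact (((hasDerivAt_id' x).const_mul (L + ε/2)).sub (hd x (lt_trans hs₀pos hx'))).congr_deriv (by ring)
      rw [hdx.deriv]
      have := abs_lt.mp (hs₀ x (le_of_lt hx')).1
      linarith [this.2]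
  set K : ℝ := |a s₀| + (|L| + ε/2) * s₀ with hK
  rw [Filter.eventually_atTop]
  refine ⟨max s₀ ((K + 1) * (2 / ε)), fun s hsge => ?_⟩
  have hss₀ : s₀ ≤ s := le_trans (le_max_left _ _) hsge
  have hspos : 0 < s := lt_of_lt_of_le hs₀pos hss₀
  have hsK : K + 1 ≤ s * (ε / 2) := by
    have h2 : (K + 1) * (2 / ε) ≤ s := le_trans (le_max_right _ _) hsge
    have h3 := mul_le_mul_of_nonneg_right h2 (le_of_lt hε2)
    calc K + 1 = (K + 1) * (2 / ε) * (ε / 2) := by field_simp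
    _ ≤ s * (ε / 2) := h3
  have hlb : a s₀ - (L - ε/2) * s₀ ≤ a s - (L - ε/2) * s :=
    hlow Set.self_mem_Ici hss₀ hss₀
  have hub : (L + ε/2) * s₀ - a s₀ ≤ (L + ε/2) * s - a s :=
    hhigh Set.self_mem_Ici hss₀ hss₀
  have habs2 : a s₀ ≤ |a s₀| := le_abs_self _
  have habs1 : -|a s₀| ≤ a s₀ := neg_abs_le _
  have hbd1 : -(L + ε/2) * s₀ ≤ (|L| + ε/2) * s₀ :=
    mul_le_mul_of_nonneg_right (by linarith [neg_abs_le L]) hs₀pos.le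
  have hbd2 : (L - ε/2) * s₀ ≤ (|L| + ε/2) * s₀ :=
    mul_le_mul_of_nonneg_right (by linarith [le_abs_self L]) hs₀pos.le
  have key1 : a s < (L + ε) * s := by nlinarith
  have key2 : (L - ε) * s < a s := by nlinarith
  rw [Real.dist_eq, abs_lt]
  constructor
  · have : L - ε < a s / s := by rw [lt_div_iff₀ hspos]; linarith
    linarith
  · have : a s / s < L + ε := by rw [div_lt_iff₀ hspos]; linarith
    linarith


/-- If `f'(s)F(s) → q` and `f'(s)²/(f(s)f''(s)) → q` as `s → ∞`
with `q > 1`, then `I(ρ) = 4·(f(φ)F(φ)/φ)·(f'(φ)F(φ) − q)` is differentiable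
on `[ρ₀,∞)` and `I'(ρ) → 0` as `ρ → ∞`. -/
theorem I_deriv_tendsto_zero (f F : ℝ → ℝ) (q : ℝ) (hq : 1 < q)
    (hf : ContDiffOn ℝ 2 f (Set.Ioi 0))
    (hfpos : ∀ s : ℝ, 0 < s → 0 < f s)
    (hf'pos : ∀ s : ℝ, 0 < s → 0 < deriv f s)
    (hfint : ∀ s : ℝ, 0 < s →
      MeasureTheory.IntegrableOn (fun t => (f t)⁻¹) (Set.Ioi s))
    (hF : ∀ s : ℝ, F s = ∫ t in Set.Ioi s, (f t)⁻¹)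
    (hlim : Filter.Tendsto (fun s => deriv f s * F s) Filter.atTop (nhds q))
    (hlim2 : Filter.Tendsto (fun s => (deriv f s) ^ 2 / (f s * deriv (deriv f) s))
      Filter.atTop (nhds q))
    (ρ₀ : ℝ) (φ : ℝ → ℝ)
    (hφpos : ∀ ρ ∈ Set.Ici ρ₀, 0 < φ ρ)
    (hφderiv : ∀ ρ ∈ Set.Ici ρ₀,
      HasDerivWithinAt φ (2 * f (φ ρ) * F (φ ρ)) (Set.Ici ρ₀) ρ)
    (hφtop : Filter.Tendsto φ Filter.atTop Filter.atTop)
    (Ifun : ℝ → ℝ)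
    (hI : ∀ ρ : ℝ, Ifun ρ =
      4 * (f (φ ρ) * F (φ ρ) / φ ρ) * (deriv f (φ ρ) * F (φ ρ) - q)) :
    ∃ I' : ℝ → ℝ,
      (∀ ρ ∈ Set.Ici ρ₀, HasDerivWithinAt Ifun (I' ρ) (Set.Ici ρ₀) ρ) ∧
      Filter.Tendsto I' Filter.atTop (nhds 0) := by
  have hq0 : (0:ℝ) < q := lt_trans one_pos hq
  have hfdiff : DifferentiableOn ℝ f (Set.Ioi 0) := hf.differentiableOn two_ne_zero
  have hf'cd : ContDiffOn ℝ 1 (deriv f) (Set.Ioi 0) :=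
    hf.deriv_of_isOpen isOpen_Ioi (by norm_num)
  have hf'diff : DifferentiableOn ℝ (deriv f) (Set.Ioi 0) := hf'cd.differentiableOn one_ne_zero
  have hfd : ∀ s : ℝ, 0 < s → HasDerivAt f (deriv f s) s := fun s hs =>
    (hfdiff.differentiableAt (isOpen_Ioi.mem_nhds hs)).hasDerivAt
  have hf'd : ∀ s : ℝ, 0 < s → HasDerivAt (deriv f) (deriv (deriv f) s) s := fun s hs =>
    (hf'diff.differentiableAt (isOpen_Ioi.mem_nhds hs)).hasDerivAt
  have hFd : ∀ s : ℝ, 0 < s → HasDerivAt F (-(f s)⁻¹) s :=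
    Fder_aux f F (fun s hs => (hfd s hs).differentiableAt.continuousAt) hfpos hfint hF
  have had : ∀ s : ℝ, 0 < s →
      HasDerivAt (fun x => f x * F x) (deriv f s * F s - 1) s := by
    intro s hs
    have h := (hfd s hs).mul (hFd s hs)
    refine h.congr_deriv ?_
    rw [mul_neg, mul_inv_cancel₀ (hfpos s hs).ne']
    ring
  have haq : Filter.Tendsto (fun s => f s * F s / s) Filter.atTop (nhds (q - 1)) :=
    div_tendsto_of_deriv_tendsto _ (fun s => deriv f s * F s - 1) _ had
      (hlim.sub tendsto_const_nhds)
  have hff'' : Filter.Tendsto (fun s => F s ^ 2 * f s * deriv (deriv f) s)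
      Filter.atTop (nhds q) := by
    have h2 : Filter.Tendsto (fun s => (deriv f s * F s) ^ 2 /
        ((deriv f s) ^ 2 / (f s * deriv (deriv f) s))) Filter.atTop (nhds (q ^ 2 / q)) :=
      (hlim.pow 2).div hlim2 (ne_of_gt hq0)
    have hval : q ^ 2 / q = q := by field_simp [hq0.ne']
    rw [hval] at h2
    refine Filter.Tendsto.congr' ?_ h2
    filter_upwards [Filter.eventually_gt_atTop (0:ℝ)] with s hs
    rcases eq_or_ne (deriv (deriv f) s) 0 with h0 | h0
    · simp [h0]
    · field_simp [(hf'pos s hs).ne', (hfpos s hs).ne', h0]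
  set E : ℝ → ℝ := fun s =>
    8 * ((f s * F s / s) * (deriv f s * F s - 1) - (f s * F s / s) ^ 2) *
      (deriv f s * F s - q) +
    8 * (f s * F s / s) *
      (F s ^ 2 * f s * deriv (deriv f) s - deriv f s * F s) with hE
  refine ⟨fun ρ => E (φ ρ), ?_, ?_⟩
  · intro ρ hρ
    have hs : 0 < φ ρ := hφpos ρ hρ
    have h1 : HasDerivAt (fun y => f y * F y) (deriv f (φ ρ) * F (φ ρ) - 1) (φ ρ) := had _ hs
    have h2 := h1.div (hasDerivAt_id (φ ρ)) (ne_of_gt hs)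
    have h3 := h2.const_mul (4:ℝ)
    have h4 := ((hf'd _ hs).mul (hFd _ hs)).sub_const q
    have h5 := h3.mul h4
    have h6 := h5.comp_hasDerivWithinAt ρ (hφderiv ρ hρ)
    have h7 := h6.congr (f₁ := Ifun) (fun x _ => by simp [hI x, Function.comp])
      (by simp [hI ρ, Function.comp])
    refine h7.congr_deriv ?_
    have hfne : f (φ ρ) ≠ 0 := (hfpos _ hs).ne'
    simp only [hE, id_eq, Pi.mul_apply, Pi.div_apply]
    field_simp
    ring
  · have h1c : Filter.Tendsto (fun _ : ℝ => (1:ℝ)) Filter.atTop (nhds 1) := tendsto_const_nhds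
    have hqc : Filter.Tendsto (fun _ : ℝ => q) Filter.atTop (nhds q) := tendsto_const_nhds
    have hbm1 := hlim.sub h1c
    have hbmq := hlim.sub hqc
    have hM : Filter.Tendsto
        (fun s => (f s * F s / s) * (deriv f s * F s - 1) - (f s * F s / s) ^ 2)
        Filter.atTop (nhds ((q - 1) * (q - 1) - (q - 1) ^ 2)) :=
      (haq.mul hbm1).sub (haq.pow 2)
    have hT1 := (hM.const_mul (8:ℝ)).mul hbmq
    have hT2 := (haq.const_mul (8:ℝ)).mul (hff''.sub hlim)
    have hEt := hT1.add hT2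
    have hval : 8 * ((q - 1) * (q - 1) - (q - 1) ^ 2) * (q - q) +
        8 * (q - 1) * (q - q) = 0 := by ring
    rw [hval] at hEt
    exact hEt.comp hφtop
end

section
/- Assume lim_{s→∞} f'(s)F(s) = q with q > 1. Then for every λ > 0, lim_{τ→∞} ∫_{ρ₀}^{τ} (1 + (τ−t))·e^{−λ(τ−t)}·|I(t)| dt = 0; in particular also lim_{τ→∞} ∫_{ρ₀}^{τ} e^{−λ(τ−t)}·|I(t)| dt = 0. -/
open MeasureTheory Filter Set Real


lemma aux_kernel (ρ₀ : ℝ) (h : ℝ → ℝ) (hc : Continuous h)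
    (h0 : Tendsto h atTop (nhds 0)) (B : ℝ) (hB : ∀ t, |h t| ≤ B)
    (K : ℝ → ℝ) (hKc : Continuous K)
    (C δ : ℝ) (hδ : 0 < δ) (hK : ∀ u, 0 ≤ u → |K u| ≤ C * Real.exp (-δ * u)) :
    Tendsto (fun τ => ∫ t in ρ₀..τ, K (τ - t) * |h t|) atTop (nhds 0) := by
  have hBnn : 0 ≤ B := le_trans (abs_nonneg _) (hB 0)
  have hCnn : 0 ≤ C := by
    have := hK 0 le_rfl
    simp at this
    exact le_trans (abs_nonneg _) this
  set Φ : ℝ → ℝ → ℝ := fun τ => Set.indicator (Ioc 0 (τ - ρ₀)) (fun u => K u * |h (τ - u)|)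
    with hΦ
  have key : Tendsto (fun τ => ∫ u in Ioi (0:ℝ), Φ τ u) atTop
      (nhds (∫ _ in Ioi (0:ℝ), (0:ℝ))) := by
    apply tendsto_integral_filter_of_dominated_convergence
      (bound := fun u => B * (C * Real.exp (-δ * u)))
    · filter_upwards with τ
      exact ((hKc.mul ((hc.comp (continuous_const.sub continuous_id)).abs)).aestronglyMeasurable).indicator
        measurableSet_Ioc
    · filter_upwards with τ
      refine ae_of_all _ fun u => ?_
      by_cases hu : u ∈ Ioc 0 (τ - ρ₀)
      · rw [hΦ]
        simp only [indicator_of_mem hu]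
        rw [Real.norm_eq_abs, abs_mul, abs_abs]
        calc |K u| * |h (τ - u)| ≤ (C * Real.exp (-δ * u)) * B := by
              apply mul_le_mul (hK u hu.1.le) (hB _) (abs_nonneg _)
              positivity
          _ = B * (C * Real.exp (-δ * u)) := by ring
      · rw [hΦ]
        simp only [indicator_of_notMem hu, norm_zero]
        positivity
    · exact (((exp_neg_integrableOn_Ioi 0 hδ).const_mul C).const_mul B)
    · rw [ae_restrict_iff' measurableSet_Ioi]
      refine ae_of_all _ fun u hu => ?_
      have h1 : Tendsto (fun τ => K u * |h (τ - u)|) atTop (nhds 0) := by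
        have h2 : Tendsto (fun τ : ℝ => τ - u) atTop atTop :=
          tendsto_atTop_add_const_right atTop (-u) tendsto_id
        have h3 := (h0.comp h2).abs
        simp only [abs_zero] at h3
        have := h3.const_mul (K u)
        simpa using this
      refine h1.congr' ?_
      filter_upwards [eventually_ge_atTop (ρ₀ + u)] with τ hτ
      simp only [hΦ]
      have hmem : u ∈ Ioc 0 (τ - ρ₀) := ⟨hu, by linarith⟩
      exact (Set.indicator_of_mem hmem (fun v => K v * |h (τ - v)|)).symm
  simp only [integral_zero] at key
  refine key.congr' ?_
  filter_upwards [eventually_ge_atTop ρ₀] with τ hτ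
  have step1 : (∫ u in Ioi (0:ℝ), Φ τ u) = ∫ u in Ioc 0 (τ - ρ₀), K u * |h (τ - u)| := by
    rw [hΦ, integral_indicator measurableSet_Ioc, Measure.restrict_restrict measurableSet_Ioc,
      Set.inter_eq_left.mpr Set.Ioc_subset_Ioi_self]
  rw [step1, ← intervalIntegral.integral_of_le (by linarith : (0:ℝ) ≤ τ - ρ₀)]
  have := intervalIntegral.integral_comp_sub_left (a := ρ₀) (b := τ)
    (fun u => K u * |h (τ - u)|) τ
  simp only [sub_self, sub_sub_cancel] at this
  rw [← this]




/-- If `f'(s)F(s) → q` with `q > 1`, then for every `λ > 0`,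
`∫_{ρ₀}^{τ} (1+(τ−t))·e^{−λ(τ−t)}·|I(t)| dt → 0` as `τ → ∞`, and in
particular `∫_{ρ₀}^{τ} e^{−λ(τ−t)}·|I(t)| dt → 0` as well. -/
theorem kernel_integral_of_I_tendsto_zero (f F : ℝ → ℝ) (q : ℝ) (hq : 1 < q)
    (hf : ContDiffOn ℝ 2 f (Set.Ioi 0))
    (hfpos : ∀ s : ℝ, 0 < s → 0 < f s)
    (hf'pos : ∀ s : ℝ, 0 < s → 0 < deriv f s)
    (hfint : ∀ s : ℝ, 0 < s →
      MeasureTheory.IntegrableOn (fun t => (f t)⁻¹) (Set.Ioi s))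
    (hF : ∀ s : ℝ, F s = ∫ t in Set.Ioi s, (f t)⁻¹)
    (hlim : Filter.Tendsto (fun s => deriv f s * F s) Filter.atTop (nhds q))
    (ρ₀ : ℝ) (φ : ℝ → ℝ)
    (hφpos : ∀ ρ ∈ Set.Ici ρ₀, 0 < φ ρ)
    (hφderiv : ∀ ρ ∈ Set.Ici ρ₀,
      HasDerivWithinAt φ (2 * f (φ ρ) * F (φ ρ)) (Set.Ici ρ₀) ρ)
    (hφtop : Filter.Tendsto φ Filter.atTop Filter.atTop)
    (Ifun : ℝ → ℝ)
    (hI : ∀ ρ : ℝ, Ifun ρ =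
      4 * (f (φ ρ) * F (φ ρ) / φ ρ) * (deriv f (φ ρ) * F (φ ρ) - q)) :
    ∀ lam : ℝ, 0 < lam →
      Filter.Tendsto
        (fun τ => ∫ t in ρ₀..τ, (1 + (τ - t)) * Real.exp (-lam * (τ - t)) * |Ifun t|)
        Filter.atTop (nhds 0) ∧
      Filter.Tendsto
        (fun τ => ∫ t in ρ₀..τ, Real.exp (-lam * (τ - t)) * |Ifun t|)
        Filter.atTop (nhds 0) := by

  -- continuity of 1/f
  have hfinv_cont : ContinuousOn (fun t => (f t)⁻¹) (Set.Ioi 0) :=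
    (hf.continuousOn).inv₀ (fun t ht => (hfpos t ht).ne')
  -- derivative of F
  have hFderiv : ∀ s : ℝ, 0 < s → HasDerivAt F (-(f s)⁻¹) s := by
    intro s hs
    set b := s + 1 with hb
    have hbpos : (0:ℝ) < b := by linarith
    have hint : IntervalIntegrable (fun t => (f t)⁻¹) volume s b := by
      rw [intervalIntegrable_iff_integrableOn_Ioc_of_le (by linarith)]
      exact (hfint s hs).mono_set Set.Ioc_subset_Ioi_self
    have hG : HasDerivAt (fun x => (∫ t in x..b, (f t)⁻¹) + F b) (-(f s)⁻¹) s := by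
      refine HasDerivAt.add_const (c := F b) ?_
      exact intervalIntegral.integral_hasDerivAt_left hint
        (hfinv_cont.stronglyMeasurableAtFilter isOpen_Ioi s hs)
        ((hfinv_cont s hs).continuousAt (isOpen_Ioi.mem_nhds hs))
    refine hG.congr_of_eventuallyEq ?_
    have hmem : Set.Ioo (0:ℝ) b ∈ nhds s := isOpen_Ioo.mem_nhds ⟨hs, by linarith⟩
    filter_upwards [hmem] with x hx
    have hx0 : (0:ℝ) < x := hx.1
    have hxb : x ≤ b := hx.2.le
    have hsplit := MeasureTheory.setIntegral_union (f := fun t => (f t)⁻¹)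
      (μ := volume) (Set.Ioc_disjoint_Ioi le_rfl) measurableSet_Ioi
      ((hfint x hx0).mono_set Set.Ioc_subset_Ioi_self) (hfint b hbpos)
    rw [Set.Ioc_union_Ioi_eq_Ioi hxb] at hsplit
    rw [hF x, hF b, hsplit, intervalIntegral.integral_of_le hxb]
  -- derivative of f
  have hfderiv : ∀ s : ℝ, 0 < s → HasDerivAt f (deriv f s) s := by
    intro s hs
    exact (((hf.differentiableOn (by norm_num)) s hs).differentiableAt
      (isOpen_Ioi.mem_nhds hs)).hasDerivAt
  -- derivative of g = f*F
  have hg : ∀ s : ℝ, 0 < s → HasDerivAt (fun x => f x * F x) (deriv f s * F s - 1) s := by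
    intro s hs
    have := (hfderiv s hs).mul (hFderiv s hs)
    have heq : deriv f s * F s + f s * -(f s)⁻¹ = deriv f s * F s - 1 := by
      rw [mul_neg, mul_inv_cancel₀ (hfpos s hs).ne']; ring
    rwa [heq] at this
  -- F nonneg
  have hFnn : ∀ s : ℝ, 0 < s → 0 ≤ F s := by
    intro s hs
    rw [hF s]
    refine MeasureTheory.setIntegral_nonneg measurableSet_Ioi fun t ht => ?_
    exact (inv_nonneg).mpr (hfpos t (lt_trans hs ht)).le
  -- eventual derivative bound
  have hev : ∀ᶠ s in atTop, |deriv f s * F s - q| < q - 1 := by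
    have := Metric.tendsto_nhds.mp hlim (q - 1) (by linarith)
    simpa [Real.dist_eq] using this
  obtain ⟨s₁, hs₁⟩ := eventually_atTop.mp hev
  set s₀ : ℝ := max s₁ 1 with hs₀def
  have hs₀pos : (0:ℝ) < s₀ := lt_of_lt_of_le one_pos (le_max_right _ _)
  have hderbd : ∀ x ∈ Set.Ici s₀, ‖deriv f x * F x - 1‖ ≤ 2 * q := by
    intro x hx
    have h1 := hs₁ x (le_trans (le_max_left _ _) hx)
    rw [abs_lt] at h1
    rw [Real.norm_eq_abs, abs_le]
    constructor <;> nlinarith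
  have hlip : ∀ s : ℝ, s₀ ≤ s → |f s * F s - f s₀ * F s₀| ≤ 2 * q * |s - s₀| := by
    intro s hs
    have := Convex.norm_image_sub_le_of_norm_hasDerivWithin_le
      (f := fun x => f x * F x) (f' := fun x => deriv f x * F x - 1)
      (s := Set.Ici s₀)
      (fun x hx => (hg x (lt_of_lt_of_le hs₀pos hx)).hasDerivWithinAt)
      hderbd (convex_Ici s₀) Set.self_mem_Ici hs
    simpa [Real.norm_eq_abs] using this
  set A : ℝ := |f s₀ * F s₀| + 2 * q * s₀ with hA
  have hAnn : 0 ≤ A := by positivity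
  have hgbd : ∀ s : ℝ, s₀ ≤ s → f s * F s ≤ A + 2 * q * s := by
    intro s hs
    have h1 := hlip s hs
    have h2 : |s - s₀| = s - s₀ := abs_of_nonneg (by linarith)
    rw [h2, abs_le] at h1
    have := abs_nonneg (f s₀ * F s₀)
    have h3 := le_abs_self (f s₀ * F s₀)
    have h4 := neg_abs_le (f s₀ * F s₀)
    nlinarith
  -- eventual bound on Ifun
  have hIbound : ∀ᶠ ρ in atTop,
      |Ifun ρ| ≤ 4 * (A + 2 * q) * |deriv f (φ ρ) * F (φ ρ) - q| := by
    filter_upwards [hφtop.eventually (eventually_ge_atTop (max s₀ 1)),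
      hφtop.eventually (eventually_ge_atTop A)] with ρ h1 h2
    have hφ1 : (1:ℝ) ≤ φ ρ := le_trans (le_max_right _ _) h1
    have hφs₀ : s₀ ≤ φ ρ := le_trans (le_max_left _ _) h1
    have hφ0 : (0:ℝ) < φ ρ := lt_of_lt_of_le one_pos hφ1
    have hgr : 0 ≤ f (φ ρ) * F (φ ρ) :=
      mul_nonneg (hfpos _ hφ0).le (hFnn _ hφ0)
    have hgr2 : f (φ ρ) * F (φ ρ) / φ ρ ≤ A + 2 * q := by
      rw [div_le_iff₀ hφ0]
      have := hgbd (φ ρ) hφs₀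
      nlinarith
    rw [hI ρ, abs_mul, abs_mul]
    have h4 : |(4:ℝ)| = 4 := by norm_num
    rw [h4]
    have h5 : |f (φ ρ) * F (φ ρ) / φ ρ| = f (φ ρ) * F (φ ρ) / φ ρ :=
      abs_of_nonneg (div_nonneg hgr hφ0.le)
    rw [h5]
    have h6 : (0:ℝ) ≤ |deriv f (φ ρ) * F (φ ρ) - q| := abs_nonneg _
    nlinarith
  -- Ifun tends to 0
  have hItendabs : Tendsto (fun ρ => |Ifun ρ|) atTop (nhds 0) := by
    apply squeeze_zero' (Eventually.of_forall fun ρ => abs_nonneg _) hIbound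
    have h7 : Tendsto (fun ρ => deriv f (φ ρ) * F (φ ρ) - q) atTop (nhds 0) := by
      have := (hlim.comp hφtop).sub_const q
      simpa using this
    have := (h7.abs).const_mul (4 * (A + 2 * q))
    simpa using this
  have hItend : Tendsto Ifun atTop (nhds 0) :=
    (tendsto_zero_iff_abs_tendsto_zero Ifun).mpr hItendabs
  -- continuity of Ifun on Ici ρ₀
  have hFcont : ContinuousOn F (Set.Ioi 0) :=
    fun s hs => (hFderiv s hs).continuousAt.continuousWithinAt
  have hf'cont : ContinuousOn (deriv f) (Set.Ioi 0) :=
    hf.continuousOn_deriv_of_isOpen isOpen_Ioi (by norm_num)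
  have hφcont : ContinuousOn φ (Set.Ici ρ₀) :=
    fun ρ hρ => (hφderiv ρ hρ).continuousWithinAt
  have hmap : Set.MapsTo φ (Set.Ici ρ₀) (Set.Ioi 0) := fun ρ hρ => hφpos ρ hρ
  have hIcont : ContinuousOn Ifun (Set.Ici ρ₀) := by
    have h1 : ContinuousOn (fun ρ => f (φ ρ)) (Set.Ici ρ₀) :=
      hf.continuousOn.comp hφcont hmap
    have h2 : ContinuousOn (fun ρ => F (φ ρ)) (Set.Ici ρ₀) :=
      hFcont.comp hφcont hmap
    have h3 : ContinuousOn (fun ρ => deriv f (φ ρ)) (Set.Ici ρ₀) :=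
      hf'cont.comp hφcont hmap
    have : ContinuousOn
        (fun ρ => 4 * (f (φ ρ) * F (φ ρ) / φ ρ) * (deriv f (φ ρ) * F (φ ρ) - q))
        (Set.Ici ρ₀) :=
      (continuousOn_const.mul ((h1.mul h2).div hφcont
        (fun ρ hρ => (hφpos ρ hρ).ne'))).mul ((h3.mul h2).sub continuousOn_const)
    exact this.congr fun ρ _ => hI ρ
  -- global bound for Ifun on Ici ρ₀
  obtain ⟨T, hT⟩ := eventually_atTop.mp (hItendabs.eventually (eventually_le_nhds one_pos))
  obtain ⟨M, hM⟩ := (isCompact_Icc (a := ρ₀) (b := max T ρ₀)).exists_bound_of_continuousOn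
    (hIcont.mono (fun x hx => hx.1))
  set B : ℝ := max M 1 with hBdef
  have hBIf : ∀ t, ρ₀ ≤ t → |Ifun t| ≤ B := by
    intro t ht
    by_cases htT : T ≤ t
    · exact le_trans (hT t htT) (le_max_right _ _)
    · push_neg at htT
      refine le_trans ?_ (le_max_left _ _)
      have := hM t ⟨ht, le_trans htT.le (le_max_left _ _)⟩
      simpa [Real.norm_eq_abs] using this
  -- continuous extension h
  set h : ℝ → ℝ := fun t => Ifun (max t ρ₀) with hhdef
  have hc : Continuous h :=
    hIcont.comp_continuous (continuous_id.max continuous_const)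
      (fun t => le_max_right t ρ₀)
  have h0 : Tendsto h atTop (nhds 0) :=
    hItend.comp (tendsto_atTop_mono (fun t => le_max_left t ρ₀) tendsto_id)
  have hBh : ∀ t, |h t| ≤ B := fun t => hBIf _ (le_max_right t ρ₀)
  intro lam hlam
  constructor
  · have hC : (0:ℝ) < max 1 (2 / lam) := lt_of_lt_of_le one_pos (le_max_left _ _)
    have := aux_kernel ρ₀ h hc h0 B hBh
      (fun u => (1 + u) * Real.exp (-lam * u))
      ((continuous_const.add continuous_id).mul
        ((continuous_const.mul continuous_id).rexp))
      (max 1 (2 / lam)) (lam / 2) (by linarith)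
      (by
        intro u hu
        have he : (1:ℝ) + lam / 2 * u ≤ Real.exp (lam / 2 * u) := by
          have := Real.add_one_le_exp (lam / 2 * u)
          linarith
        have hc1 : (1:ℝ) ≤ max 1 (2 / lam) := le_max_left _ _
        have hc2 : 2 / lam ≤ max 1 (2 / lam) := le_max_right _ _
        have hc3 : (1:ℝ) ≤ max 1 (2 / lam) * (lam / 2) := by
          rw [div_le_iff₀ hlam] at hc2
          nlinarith
        have habs : |(1 + u) * Real.exp (-lam * u)| = (1 + u) * Real.exp (-lam * u) := by
          apply abs_of_nonneg
          positivity
        rw [habs]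
        have key : (1 + u) ≤ max 1 (2 / lam) * Real.exp (lam / 2 * u) := by
          calc 1 + u ≤ max 1 (2 / lam) * (1 + lam / 2 * u) := by nlinarith
            _ ≤ max 1 (2 / lam) * Real.exp (lam / 2 * u) := by nlinarith
        calc (1 + u) * Real.exp (-lam * u)
            ≤ (max 1 (2 / lam) * Real.exp (lam / 2 * u)) * Real.exp (-lam * u) :=
              mul_le_mul_of_nonneg_right key (Real.exp_pos _).le
          _ = max 1 (2 / lam) * Real.exp (-(lam / 2) * u) := by
              rw [mul_assoc, ← Real.exp_add]; ring_nf)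
    refine this.congr' ?_
    filter_upwards [eventually_ge_atTop ρ₀] with τ hτ
    apply intervalIntegral.integral_congr
    intro t ht
    rw [Set.uIcc_of_le hτ] at ht
    simp only [hhdef, max_eq_left ht.1]
  · have := aux_kernel ρ₀ h hc h0 B hBh
      (fun u => Real.exp (-lam * u))
      ((continuous_const.mul continuous_id).rexp)
      1 lam hlam
      (by
        intro u hu
        rw [abs_of_nonneg (Real.exp_pos _).le, one_mul])
    refine this.congr' ?_
    filter_upwards [eventually_ge_atTop ρ₀] with τ hτ
    apply intervalIntegral.integral_congr
    intro t ht
    rw [Set.uIcc_of_le hτ] at ht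
    simp only [hhdef, max_eq_left ht.1]
end

section
/- Assume lim_{s→∞} f'(s)F(s) = q with q > 1. Let η : [ρ₀,∞) → ℝ satisfy η(ρ) → 0 as ρ → ∞. Then φ(ρ)(1+η(ρ)) > 0 for all sufficiently large ρ and lim_{ρ→∞} F(φ(ρ)(1+η(ρ)))/F(φ(ρ)) = 1. -/
open Set Filter MeasureTheory

lemma Fsub_aux (f F : ℝ → ℝ)
    (hfint : ∀ s : ℝ, 0 < s → MeasureTheory.IntegrableOn (fun t => (f t)⁻¹) (Set.Ioi s))
    (hF : ∀ s : ℝ, F s = ∫ t in Set.Ioi s, (f t)⁻¹) :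
    ∀ a b : ℝ, 0 < a → a ≤ b → F a = (∫ t in Set.Ioc a b, (f t)⁻¹) + F b := by
  intro a b ha hab
  rw [hF a, hF b]
  rw [← MeasureTheory.setIntegral_union (Set.Ioc_disjoint_Ioi le_rfl) measurableSet_Ioi
    ((hfint a ha).mono_set Set.Ioc_subset_Ioi_self) (hfint b (lt_of_lt_of_le ha hab)),
    Set.Ioc_union_Ioi_eq_Ioi hab]

lemma Fpos_aux (f F : ℝ → ℝ)
    (hfpos : ∀ s : ℝ, 0 < s → 0 < f s)
    (hfint : ∀ s : ℝ, 0 < s → MeasureTheory.IntegrableOn (fun t => (f t)⁻¹) (Set.Ioi s))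
    (hF : ∀ s : ℝ, F s = ∫ t in Set.Ioi s, (f t)⁻¹) :
    ∀ s : ℝ, 0 < s → 0 < F s := by
  intro s hs
  rw [hF s]
  rw [MeasureTheory.setIntegral_pos_iff_support_of_nonneg_ae ?nn (hfint s hs)]
  case nn =>
    filter_upwards [ae_restrict_mem measurableSet_Ioi] with t ht
    exact le_of_lt (inv_pos.2 (hfpos t (hs.trans ht)))
  · have : (Set.Ioi s) ⊆ Function.support (fun t => (f t)⁻¹) ∩ Set.Ioi s := fun t ht =>
      ⟨inv_ne_zero (ne_of_gt (hfpos t (hs.trans ht))), ht⟩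
    calc (0:ENNReal) < ⊤ := by simp
    _ = MeasureTheory.volume (Set.Ioi s) := (Real.volume_Ioi).symm
    _ ≤ _ := measure_mono this

lemma Fbound_aux (f : ℝ → ℝ) (hfpos : ∀ s : ℝ, 0 < s → 0 < f s)
    (hmono : StrictMonoOn f (Set.Ioi 0))
    (hfint : ∀ s : ℝ, 0 < s → MeasureTheory.IntegrableOn (fun t => (f t)⁻¹) (Set.Ioi s))
    (a b : ℝ) (ha : 0 < a) (hab : a ≤ b) :
    (∫ t in Set.Ioc a b, (f t)⁻¹) * f a ≤ b - a := by
  have hfa := hfpos a ha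
  rw [← le_div_iff₀ hfa, div_eq_mul_inv]
  have hint : MeasureTheory.IntegrableOn (fun t => (f t)⁻¹) (Set.Ioc a b) :=
    (hfint a ha).mono_set Set.Ioc_subset_Ioi_self
  calc (∫ t in Set.Ioc a b, (f t)⁻¹) ≤ ∫ _t in Set.Ioc a b, (f a)⁻¹ := by
        apply MeasureTheory.setIntegral_mono_on hint (integrableOn_const (by simp))
          measurableSet_Ioc
        intro t ht
        exact inv_anti₀ hfa (le_of_lt (hmono ha (lt_trans ha ht.1) ht.1))
    _ = (b - a) * (f a)⁻¹ := by
        rw [MeasureTheory.setIntegral_const, Real.volume_real_Ioc_of_le hab, smul_eq_mul]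

lemma Flinear_aux (f F : ℝ → ℝ) (q : ℝ) (hq : 1 < q)
    (hderiv : ∀ s : ℝ, 0 < s → HasDerivAt f (deriv f s) s)
    (hfpos : ∀ s : ℝ, 0 < s → 0 < f s)
    (hFpos : ∀ s : ℝ, 0 < s → 0 < F s)
    (hFderiv : ∀ s : ℝ, 0 < s → HasDerivAt F (-(f s)⁻¹) s)
    (hlim : Filter.Tendsto (fun s => deriv f s * F s) Filter.atTop (nhds q)) :
    ∃ S : ℝ, 0 < S ∧ ∀ s : ℝ, S ≤ s → (q - 1) / 4 * s ≤ f s * F s := by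
  obtain ⟨S₁, hS₁⟩ := (Filter.eventually_atTop).1
    (hlim.eventually (eventually_ge_nhds (show (q+1)/2 < q by linarith)))
  set S₀ := max S₁ 1 with hS₀def
  have hS₀pos : (0:ℝ) < S₀ := lt_of_lt_of_le one_pos (le_max_right _ _)
  have hmono : MonotoneOn (fun x => f x * F x - (q-1)/2 * x) (Set.Ici S₀) := by
    have hd : ∀ x ∈ Set.Ici S₀, HasDerivAt (fun x => f x * F x - (q-1)/2 * x)
        (deriv f x * F x - 1 - (q-1)/2) x := by
      intro x hx
      have hxpos : 0 < x := lt_of_lt_of_le hS₀pos hx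
      have h1 := ((hderiv x hxpos).mul (hFderiv x hxpos)).sub
        ((hasDerivAt_id x).const_mul ((q-1)/2))
      have : deriv f x * F x + f x * -(f x)⁻¹ - (q-1)/2 * 1
          = deriv f x * F x - 1 - (q-1)/2 := by
        field_simp [ne_of_gt (hfpos x hxpos)]; ring
      rwa [this] at h1
    apply monotoneOn_of_deriv_nonneg (convex_Ici S₀)
    · exact fun x hx => ((hd x hx).continuousAt).continuousWithinAt
    · rw [interior_Ici]
      exact fun x hx => ((hd x (Set.mem_Ici.2 (le_of_lt hx))).differentiableAt).differentiableWithinAt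
    · rw [interior_Ici]
      intro x hx
      rw [(hd x (Set.mem_Ici.2 (le_of_lt hx))).deriv]
      have := hS₁ x (le_trans (le_max_left _ _) (le_of_lt hx))
      linarith
  refine ⟨2 * S₀, by linarith, fun s hs => ?_⟩
  have hs' : S₀ ≤ s := by linarith
  have h2 := hmono (Set.self_mem_Ici) hs' hs'
  have hfF := mul_pos (hfpos S₀ hS₀pos) (hFpos S₀ hS₀pos)
  simp only at h2
  nlinarith

set_option maxHeartbeats 1600000 in
/-- If `f'(s)F(s) → q` with `q > 1`, `φ` as in the context and
`η(ρ) → 0` as `ρ → ∞`, then `φ(ρ)(1+η(ρ)) > 0` for all large `ρ` and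
`F(φ(ρ)(1+η(ρ)))/F(φ(ρ)) → 1` as `ρ → ∞`. -/
theorem F_ratio_tendsto_one (f F : ℝ → ℝ) (q : ℝ) (hq : 1 < q)
    (hf : ContDiffOn ℝ 2 f (Set.Ioi 0))
    (hfpos : ∀ s : ℝ, 0 < s → 0 < f s)
    (hf'pos : ∀ s : ℝ, 0 < s → 0 < deriv f s)
    (hfint : ∀ s : ℝ, 0 < s →
      MeasureTheory.IntegrableOn (fun t => (f t)⁻¹) (Set.Ioi s))
    (hF : ∀ s : ℝ, F s = ∫ t in Set.Ioi s, (f t)⁻¹)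
    (hlim : Filter.Tendsto (fun s => deriv f s * F s) Filter.atTop (nhds q))
    (ρ₀ : ℝ) (φ : ℝ → ℝ)
    (hφpos : ∀ ρ ∈ Set.Ici ρ₀, 0 < φ ρ)
    (hφderiv : ∀ ρ ∈ Set.Ici ρ₀,
      HasDerivWithinAt φ (2 * f (φ ρ) * F (φ ρ)) (Set.Ici ρ₀) ρ)
    (hφtop : Filter.Tendsto φ Filter.atTop Filter.atTop)
    (η : ℝ → ℝ) (hη : Filter.Tendsto η Filter.atTop (nhds 0)) :
    (∀ᶠ ρ in Filter.atTop, 0 < φ ρ * (1 + η ρ)) ∧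
    Filter.Tendsto (fun ρ => F (φ ρ * (1 + η ρ)) / F (φ ρ))
      Filter.atTop (nhds 1) := by
  -- basic facts
  have hderiv : ∀ s : ℝ, 0 < s → HasDerivAt f (deriv f s) s := fun s hs =>
    ((hf.differentiableOn (by norm_num)).differentiableAt (Ioi_mem_nhds hs)).hasDerivAt
  have hmonof : StrictMonoOn f (Set.Ioi 0) := by
    apply strictMonoOn_of_deriv_pos (convex_Ioi 0) (hf.continuousOn)
    rw [interior_Ioi]
    exact fun s hs => hf'pos s hs
  have hFsub := Fsub_aux f F hfint hF
  have hFpos := Fpos_aux f F hfpos hfint hF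
  have hFderiv : ∀ s : ℝ, 0 < s → HasDerivAt F (-(f s)⁻¹) s := by
    intro s hs
    set s₀ := s / 2 with hs₀def
    have hs₀ : 0 < s₀ := by positivity
    have hs₀s : s₀ < s := by linarith
    have hcont : ContinuousOn (fun t => (f t)⁻¹) (Set.Ioi 0) := fun t ht =>
      ((hf.continuousOn t ht).inv₀ (ne_of_gt (hfpos t ht)))
    have hg : HasDerivAt (fun x => F s₀ - ∫ t in s₀..x, (f t)⁻¹) (-(f s)⁻¹) s := by
      have hintegr : IntervalIntegrable (fun t => (f t)⁻¹) MeasureTheory.volume s₀ s := by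
        rw [intervalIntegrable_iff_integrableOn_Ioc_of_le (le_of_lt hs₀s)]
        exact (hfint s₀ hs₀).mono_set Set.Ioc_subset_Ioi_self
      have hmeas : StronglyMeasurableAtFilter (fun t => (f t)⁻¹) (nhds s) :=
        hcont.stronglyMeasurableAtFilter isOpen_Ioi s hs
      have hca : ContinuousAt (fun t => (f t)⁻¹) s :=
        hcont.continuousAt (Ioi_mem_nhds hs)
      have := (intervalIntegral.integral_hasDerivAt_right hintegr hmeas hca).const_sub (F s₀)
      simpa using this
    apply hg.congr_of_eventuallyEq
    filter_upwards [Ioi_mem_nhds hs₀s] with x hx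
    have := hFsub s₀ x hs₀ (le_of_lt hx)
    rw [intervalIntegral.integral_of_le (le_of_lt hx)]
    linarith
  obtain ⟨S, hSpos, hlin⟩ := Flinear_aux f F q hq hderiv hfpos hFpos hFderiv hlim
  set c : ℝ := (q - 1) / 4 with hcdef
  have hcpos : 0 < c := by rw [hcdef]; linarith
  set δ : ℝ := min (1/2) (c/8) with hδdef
  have hδpos : 0 < δ := lt_min (by norm_num) (by linarith)
  have hδhalf : δ ≤ 1/2 := min_le_left _ _
  have hδc : δ ≤ c/8 := min_le_right _ _
  -- key eventual bound
  have key : ∀ᶠ ρ in Filter.atTop, 0 < φ ρ * (1 + η ρ) ∧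
      |F (φ ρ * (1 + η ρ)) / F (φ ρ) - 1| ≤ 4 / c * |η ρ| := by
    filter_upwards [hφtop.eventually_ge_atTop (2 * S),
      NormedAddCommGroup.tendsto_nhds_zero.mp hη δ hδpos] with ρ hφρ hηρ
    set a := φ ρ with hadef
    set b := φ ρ * (1 + η ρ) with hbdef
    rw [Real.norm_eq_abs] at hηρ
    have hηle : |η ρ| ≤ δ := le_of_lt hηρ
    have hη1 : -δ ≤ η ρ := neg_le_of_abs_le hηle
    have hη2 : η ρ ≤ δ := le_of_abs_le hηle
    have ha : 0 < a := by linarith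
    have hb : 0 < b := by nlinarith
    have haS : S ≤ a := by linarith
    have hbS : S ≤ b := by nlinarith
    have hFa := hFpos a ha
    have hFb := hFpos b hb
    have hfa := hfpos a ha
    have hfb := hfpos b hb
    refine ⟨hb, ?_⟩
    have hrw : F b / F a - 1 = (F b - F a) / F a := by field_simp
    rw [hrw, abs_div, abs_of_pos hFa, div_le_iff₀ hFa]
    rcases le_or_gt a b with hab | hab
    · -- η ρ ≥ 0
      have hηnn : 0 ≤ η ρ := by nlinarith
      have hI := hFsub a b ha hab
      set I := ∫ t in Set.Ioc a b, (f t)⁻¹ with hIdef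
      have hInn : 0 ≤ I := MeasureTheory.setIntegral_nonneg measurableSet_Ioc
        (fun t ht => le_of_lt (inv_pos.2 (hfpos t (lt_trans ha ht.1))))
      have hIb : I * f a ≤ b - a := Fbound_aux f hfpos hmonof hfint a b ha hab
      have hGl := hlin a haS
      have habs : |F b - F a| = I := by rw [abs_of_nonpos (by linarith)]; linarith
      rw [habs, abs_of_nonneg hηnn]
      -- I * c ≤ 4 * η * F a : from I * f a ≤ η * a and c * a ≤ f a * F a
      have h1 : b - a = η ρ * a := by rw [hbdef, hadef]; ring
      rw [div_mul_eq_mul_div, div_mul_eq_mul_div, le_div_iff₀ hcpos]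
      nlinarith [mul_le_mul_of_nonneg_right hIb (le_of_lt hFa),
        mul_le_mul_of_nonneg_left hGl hInn, mul_nonneg hηnn (le_of_lt hFa)]
    · -- η ρ < 0
      have hηnp : η ρ ≤ 0 := by nlinarith
      have hI := hFsub b a hb (le_of_lt hab)
      set J := ∫ t in Set.Ioc b a, (f t)⁻¹ with hJdef
      have hJnn : 0 ≤ J := MeasureTheory.setIntegral_nonneg measurableSet_Ioc
        (fun t ht => le_of_lt (inv_pos.2 (hfpos t (lt_trans hb ht.1))))
      have hJb : J * f b ≤ a - b := Fbound_aux f hfpos hmonof hfint b a hb (le_of_lt hab)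
      have hGl := hlin b hbS
      have habs : |F b - F a| = J := by rw [abs_of_nonneg (by linarith)]; linarith
      rw [habs, abs_of_nonpos hηnp]
      have h1 : a - b = -η ρ * a := by rw [hbdef, hadef]; ring
      have hba : a / 2 ≤ b := by
        have h12 : (1:ℝ)/2 ≤ 1 + η ρ := by linarith
        have := mul_le_mul_of_nonneg_left h12 (le_of_lt ha)
        calc a / 2 = a * (1/2) := by ring
        _ ≤ a * (1 + η ρ) := this
        _ = b := by rw [hbdef, hadef]
      -- J * c * b ≤ J * f b * F b ≤ (-η a) * F b ; so J * c ≤ 2 * (-η) * F b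
      have h2 : J * c ≤ 2 * (-η ρ) * F b := by
        have h3 : J * (c * b) ≤ J * (f b * F b) :=
          mul_le_mul_of_nonneg_left hGl hJnn
        have h4 : J * f b * F b ≤ (-η ρ * a) * F b := by
          rw [← h1]; exact mul_le_mul_of_nonneg_right hJb (le_of_lt hFb)
        have hchain : (J * c) * a ≤ (2 * (-η ρ) * F b) * a := by
          calc (J * c) * a ≤ (J * c) * (2 * b) :=
                mul_le_mul_of_nonneg_left (by linarith)
                  (mul_nonneg hJnn (le_of_lt hcpos))
          _ = 2 * (J * (c * b)) := by ring
          _ ≤ 2 * (J * (f b * F b)) := by linarith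
          _ ≤ 2 * ((-η ρ * a) * F b) := by linarith
          _ = (2 * (-η ρ) * F b) * a := by ring
        exact le_of_mul_le_mul_right hchain ha
      -- F a = F b - J ≥ F b (1 - 2δ/c) ≥ F b / 2
      have h5 : F b ≤ 2 * F a := by
        have h6 : 2 * (-η ρ) * F b ≤ (F b / 4) * c := by
          have := mul_le_mul_of_nonneg_right (show 2 * (-η ρ) ≤ c/4 by linarith)
            (le_of_lt hFb)
          linarith
        have h8 : J ≤ F b / 4 := le_of_mul_le_mul_right (by linarith) hcpos
        linarith
      rw [div_mul_eq_mul_div, div_mul_eq_mul_div, le_div_iff₀ hcpos]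
      have h9 := mul_le_mul_of_nonneg_left h5 (show (0:ℝ) ≤ 2 * (-η ρ) by linarith)
      linarith
  constructor
  · filter_upwards [key] with ρ h using h.1
  · have h0 : Filter.Tendsto (fun ρ => F (φ ρ * (1 + η ρ)) / F (φ ρ) - 1)
        Filter.atTop (nhds 0) := by
      have hg : Filter.Tendsto (fun ρ => 4 / c * |η ρ|) Filter.atTop (nhds 0) := by
        have : Filter.Tendsto (fun ρ => |η ρ|) Filter.atTop (nhds 0) := by
          simpa using hη.abs
        simpa using this.const_mul (4 / c)
      refine squeeze_zero_norm' ?_ hg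
      filter_upwards [key] with ρ h
      rw [Real.norm_eq_abs]
      exact h.2
    have := h0.add (tendsto_const_nhds (x := (1:ℝ)))
    simpa using this
end
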